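/- Fix natural numbers n, k with k ≤ n, and a natural number a. Then the number of ordered pairs (p, q), where p, q : {1,...,n} → {+1, −1} are sequences each with exactly k entries equal to +1, such that P_i ≤ Q_i for all 1 ≤ i ≤ n and Σ_{i=1}^n (Q_i − P_i) = 2a (where P_i and Q_i are the partial sums of p and q), equals the number of step words r : {1,...,n} → {U, D, O1, O2} such that H_i ≥ 0 for all 1 ≤ i ≤ n, H_n = 0, exactly k of the steps of r lie in {U, O1}, and Σ_{i=1}^n H_i = a (where H_i is the sum of the weights of the first i steps of r, with weights w(U)=1, w(D)=−1, w(O1)=w(O2)=0). -/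

import Mathlib

/-- The four kinds of steps: up, down, and two colors of horizontal steps. -/
inductive Step where
  | U : Step
  | D : Step
  | O1 : Step
  | O2 : Step
deriving DecidableEq

instance instFintypeStep : Fintype Step :=
  ⟨{Step.U, Step.D, Step.O1, Step.O2}, fun x => by cases x <;> simp⟩

/-- Weight of a step: U has weight 1, D has weight −1, O1 and O2 weight 0. -/
def Step.wt : Step → ℤ
  | .U => 1
  | .D => -1
  | .O1 => 0
  | .O2 => 0

/-- Height of a step word after its first `i` steps. -/
def stepHeight {n : ℕ} (r : Fin n → Step) (i : ℕ) : ℤ :=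
  ∑ j ∈ Finset.univ.filter (fun j : Fin n => (j : ℕ) < i), (r j).wt

/-- Partial sum of a `±1`-sequence after its first `i` entries. -/
def partialSum {n : ℕ} (p : Fin n → ℤ) (i : ℕ) : ℤ :=
  ∑ j ∈ Finset.univ.filter (fun j : Fin n => (j : ℕ) < i), p j

/-- auxiliary defs -/
def psq : Step → ℤ × ℤ
  | .U => (-1, 1)
  | .D => (1, -1)
  | .O1 => (1, 1)
  | .O2 => (-1, -1)

def mkStep (p q : ℤ) : Step :=
  if p = 1 then (if q = 1 then .O1 else .D) else (if q = 1 then .U else .O2)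

lemma psq_mkStep {p q : ℤ} (hp : p = 1 ∨ p = -1) (hq : q = 1 ∨ q = -1) :
    psq (mkStep p q) = (p, q) := by
  rcases hp with rfl | rfl <;> rcases hq with rfl | rfl <;> norm_num [mkStep, psq]

lemma psq_wt (s : Step) : (psq s).2 - (psq s).1 = 2 * s.wt := by
  cases s <;> norm_num [psq, Step.wt]

lemma psq_snd_eq_one (s : Step) : (psq s).2 = 1 ↔ (s = .U ∨ s = .O1) := by
  cases s <;> simp [psq]

lemma psq_mem (s : Step) : ((psq s).1 = 1 ∨ (psq s).1 = -1) ∧ ((psq s).2 = 1 ∨ (psq s).2 = -1) := by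
  cases s <;> norm_num [psq]

lemma mkStep_psq (s : Step) : mkStep (psq s).1 (psq s).2 = s := by
  cases s <;> norm_num [psq, mkStep]

lemma height_rel {n : ℕ} (r : Fin n → Step) (p q : Fin n → ℤ)
    (h : ∀ j, q j - p j = 2 * (r j).wt) (i : ℕ) :
    partialSum q i - partialSum p i = 2 * stepHeight r i := by
  unfold partialSum stepHeight
  rw [Finset.mul_sum, ← Finset.sum_sub_distrib]
  exact Finset.sum_congr rfl fun j _ => h j

lemma sum_pm {n : ℕ} (p : Fin n → ℤ) (hp : ∀ i, p i = 1 ∨ p i = -1) :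
    partialSum p n = 2 * ((Finset.univ.filter fun i => p i = 1).card : ℤ) - n := by
  have huniv : (Finset.univ.filter (fun j : Fin n => (j : ℕ) < n)) = Finset.univ := by
    apply Finset.filter_true_of_mem; exact fun j _ => j.isLt
  unfold partialSum
  rw [huniv]
  have : ∀ j : Fin n, p j = 2 * (if p j = 1 then (1:ℤ) else 0) - 1 := by
    intro j; rcases hp j with h | h <;> simp [h]
  rw [Finset.sum_congr rfl fun j _ => this j]
  rw [Finset.sum_sub_distrib, ← Finset.mul_sum, Finset.sum_boole]
  simp [Finset.card_univ]

lemma mkStep_mem_iff {p q : ℤ} (hp : p = 1 ∨ p = -1) (hq : q = 1 ∨ q = -1) :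
    (mkStep p q = Step.U ∨ mkStep p q = Step.O1) ↔ q = 1 := by
  rw [← psq_snd_eq_one, psq_mkStep hp hq]

/-- The bijection $A$, restricted to nested pairs: ordered pairs of
$±1$-sequences of length $n$, each with exactly $k$ entries equal to $+1$,
with $P_i ≤ Q_i$ for all $1 ≤ i ≤ n$ and $\sum_{i=1}^n (Q_i - P_i) = 2a$, are
equinumerous with step words of length $n$ staying weakly above the axis, with
final height $0$, exactly $k$ steps in $\{U, O_1\}$, and $\sum_{i=1}^n H_i = a$. -/
theorem card_nested_pairs_eq_card_bicoloredMotzkin (n k a : ℕ) (hk : k ≤ n) :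
    Nat.card {pq : (Fin n → ℤ) × (Fin n → ℤ) //
        (∀ i, pq.1 i = 1 ∨ pq.1 i = -1) ∧ (∀ i, pq.2 i = 1 ∨ pq.2 i = -1) ∧
        (Finset.univ.filter fun i => pq.1 i = 1).card = k ∧
        (Finset.univ.filter fun i => pq.2 i = 1).card = k ∧
        (∀ i ∈ Finset.range n, partialSum pq.1 (i + 1) ≤ partialSum pq.2 (i + 1)) ∧
        (∑ i ∈ Finset.range n, (partialSum pq.2 (i + 1) - partialSum pq.1 (i + 1)))
          = 2 * (a : ℤ)}
      = Nat.card {r : Fin n → Step //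
        (∀ i ∈ Finset.range n, 0 ≤ stepHeight r (i + 1)) ∧
        stepHeight r n = 0 ∧
        (Finset.univ.filter fun i => r i = Step.U ∨ r i = Step.O1).card = k ∧
        (∑ i ∈ Finset.range n, stepHeight r (i + 1)) = (a : ℤ)} := by
  apply Nat.card_congr
  refine ⟨fun x =>
      ⟨fun i => mkStep (x.1.1 i) (x.1.2 i), ?_⟩,
    fun y =>
      ⟨(fun i => (psq (y.1 i)).1, fun i => (psq (y.1 i)).2), ?_⟩, ?_, ?_⟩
  · -- forward conditions
    obtain ⟨⟨p, q⟩, hp, hq, hcp, hcq, hle, hsum⟩ := x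
    replace hp : ∀ i, p i = 1 ∨ p i = -1 := hp
    replace hq : ∀ i, q i = 1 ∨ q i = -1 := hq
    replace hcp : (Finset.univ.filter fun i => p i = 1).card = k := hcp
    replace hcq : (Finset.univ.filter fun i => q i = 1).card = k := hcq
    replace hle : ∀ i ∈ Finset.range n, partialSum p (i + 1) ≤ partialSum q (i + 1) := hle
    replace hsum : (∑ i ∈ Finset.range n,
        (partialSum q (i + 1) - partialSum p (i + 1))) = 2 * (a : ℤ) := hsum
    set r := fun i => mkStep (p i) (q i) with hr
    have hrel : ∀ i, partialSum q i - partialSum p i = 2 * stepHeight r i := by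
      refine height_rel r p q fun j => ?_
      have := psq_wt (r j)
      rwa [hr, psq_mkStep (hp j) (hq j)] at this
    have hPn : partialSum p n = partialSum q n := by
      rw [sum_pm p hp, sum_pm q hq, hcp, hcq]
    have hHn : stepHeight r n = 0 := by
      have := hrel n; omega
    refine ⟨fun i hi => ?_, hHn, ?_, ?_⟩
    · have h1 := hle i hi
      have h2 := hrel (i + 1)
      omega
    · rw [Finset.filter_congr (fun i _ => mkStep_mem_iff (hp i) (hq i))]
      exact hcq
    · have h2 : ∑ i ∈ Finset.range n, 2 * stepHeight r (i + 1) = 2 * (a : ℤ) := by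
        rw [← hsum]
        exact Finset.sum_congr rfl fun i _ => (hrel (i + 1)).symm
      rw [← Finset.mul_sum] at h2
      omega
  · -- backward conditions
    obtain ⟨r, hpos, hzero, hcard, hsum⟩ := y
    set p := fun i => (psq (r i)).1 with hpd
    set q := fun i => (psq (r i)).2 with hqd
    have hp : ∀ i, p i = 1 ∨ p i = -1 := fun i => (psq_mem (r i)).1
    have hq : ∀ i, q i = 1 ∨ q i = -1 := fun i => (psq_mem (r i)).2
    have hrel : ∀ i, partialSum q i - partialSum p i = 2 * stepHeight r i :=
      height_rel r p q fun j => psq_wt (r j)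
    have hcq : (Finset.univ.filter fun i => q i = 1).card = k := by
      rw [Finset.filter_congr (fun i _ => psq_snd_eq_one (r i))]
      exact hcard
    have hcp : (Finset.univ.filter fun i => p i = 1).card = k := by
      have h1 := sum_pm p hp
      have h2 := sum_pm q hq
      have h3 := hrel n
      rw [hzero] at h3
      rw [hcq] at h2
      have h4 : (((Finset.univ.filter fun i => p i = 1).card : ℤ)) = k := by omega
      exact_mod_cast h4
    refine ⟨hp, hq, hcp, hcq, fun i hi => ?_, ?_⟩
    · show partialSum p (i + 1) ≤ partialSum q (i + 1)
      have h1 := hpos i hi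
      have h2 := hrel (i + 1)
      omega
    · show (∑ i ∈ Finset.range n, (partialSum q (i + 1) - partialSum p (i + 1))) = 2 * (a : ℤ)
      calc ∑ i ∈ Finset.range n, (partialSum q (i + 1) - partialSum p (i + 1))
          = ∑ i ∈ Finset.range n, 2 * stepHeight r (i + 1) :=
            Finset.sum_congr rfl fun i _ => hrel (i + 1)
        _ = 2 * (a : ℤ) := by rw [← Finset.mul_sum, hsum]
  · -- left inverse
    rintro ⟨⟨p, q⟩, hp, hq, _⟩
    apply Subtype.ext
    show ((fun i => (psq (mkStep (p i) (q i))).1, fun i => (psq (mkStep (p i) (q i))).2) :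
        (Fin n → ℤ) × (Fin n → ℤ)) = (p, q)
    refine Prod.ext (funext fun i => ?_) (funext fun i => ?_)
    · exact congrArg Prod.fst (psq_mkStep (hp i) (hq i))
    · exact congrArg Prod.snd (psq_mkStep (hp i) (hq i))
  · -- right inverse
    rintro ⟨r, _⟩
    apply Subtype.ext
    show (fun i => mkStep (psq (r i)).1 (psq (r i)).2) = r
    funext i
    exact mkStep_psq (r i)
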